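/- Let Q be the integer program of the SRS problem (minimize Σ_{w∈V} x_w subject to Σ_{w∈N(u)} x_w ≥ 1 for all rays u ∈ R, x ∈ {0,1}) and Q_l its LP relaxation. Then the KMN algorithm returns a feasible set S with |S| ≤ 2·OPT(Q_l); in particular OPT(Q) ≤ 2·OPT(Q_l). -/
import Mathlib


attribute [local instance] Classical.propDecidable

/-- A leftward-directed horizontal ray, given by its right endpoint `(x, y)`. -/
structure Ray where
  x : ℝ
  y : ℝ

/-- A vertical segment with `x`-coordinate `x` and `y`-range `[lo, hi]`. -/
structure VSeg where
  x : ℝ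
  lo : ℝ
  hi : ℝ

/-- A leftward-directed ray intersects a vertical segment. -/
def hits (r : Ray) (v : VSeg) : Prop :=
  v.x ≤ r.x ∧ v.lo ≤ r.y ∧ r.y ≤ v.hi

/-- An execution trace of the KMN algorithm for the SRS problem on `(R, V)`
(select a minimum subset of the vertical segments `V` stabbing all rays of `R`).
In iteration `i`, `riv i` is the surviving ray of smallest right-endpoint
`x`-coordinate, `N_i` is the set of surviving segments intersecting it, and
`vtop i` / `vbot i` are the segments of `N_i` with topmost top endpoint and
bottommost bottom endpoint; both join the solution and get the token `N_i`;
all rays hit by them and all segments of `N_i` are then deleted. -/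
structure KMNTrace (R : Finset Ray) (V : Finset VSeg) where
  steps : ℕ
  Rs : ℕ → Finset Ray
  Vs : ℕ → Finset VSeg
  Sol : ℕ → Finset VSeg
  Tok : ℕ → VSeg → Finset VSeg
  riv : ℕ → Ray
  vtop : ℕ → VSeg
  vbot : ℕ → VSeg
  init_R : Rs 0 = R
  init_V : Vs 0 = V
  init_S : Sol 0 = ∅
  init_T : ∀ v, Tok 0 v = ∅
  running : ∀ i < steps, Rs i ≠ ∅
  riv_mem : ∀ i, 1 ≤ i → i ≤ steps → riv i ∈ Rs (i-1)
  riv_min : ∀ i, 1 ≤ i → i ≤ steps → ∀ r ∈ Rs (i-1), (riv i).x ≤ r.x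
  vtop_mem : ∀ i, 1 ≤ i → i ≤ steps →
    vtop i ∈ (Vs (i-1)).filter (fun v => hits (riv i) v)
  vtop_top : ∀ i, 1 ≤ i → i ≤ steps →
    ∀ v ∈ (Vs (i-1)).filter (fun v => hits (riv i) v), v.hi ≤ (vtop i).hi
  vbot_mem : ∀ i, 1 ≤ i → i ≤ steps →
    vbot i ∈ (Vs (i-1)).filter (fun v => hits (riv i) v)
  vbot_bot : ∀ i, 1 ≤ i → i ≤ steps →
    ∀ v ∈ (Vs (i-1)).filter (fun v => hits (riv i) v), (vbot i).lo ≤ v.lo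
  Sol_step : ∀ i, 1 ≤ i → i ≤ steps →
    Sol i = Sol (i-1) ∪ {vtop i, vbot i}
  Tok_step : ∀ i, 1 ≤ i → i ≤ steps → ∀ v : VSeg,
    Tok i v = if v = vtop i ∨ v = vbot i
      then (Vs (i-1)).filter (fun w => hits (riv i) w)
      else Tok (i-1) v
  R_step : ∀ i, 1 ≤ i → i ≤ steps →
    Rs i = (Rs (i-1)).filter (fun r => ¬ hits r (vtop i) ∧ ¬ hits r (vbot i))
  V_step : ∀ i, 1 ≤ i → i ≤ steps →
    Vs i = Vs (i-1) \ (Vs (i-1)).filter (fun v => hits (riv i) v)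
  term : Rs steps = ∅

namespace KMNTrace

variable {R : Finset Ray} {V : Finset VSeg} (t : KMNTrace R V)

lemma Vs_succ_sub (k : ℕ) (hk : k + 1 ≤ t.steps) : t.Vs (k+1) ⊆ t.Vs k := by
  have h := t.V_step (k+1) (by omega) hk
  simp only [Nat.add_sub_cancel] at h
  rw [h]; exact Finset.sdiff_subset

lemma Rs_succ_sub (k : ℕ) (hk : k + 1 ≤ t.steps) : t.Rs (k+1) ⊆ t.Rs k := by
  have h := t.R_step (k+1) (by omega) hk
  simp only [Nat.add_sub_cancel] at h
  rw [h]; exact Finset.filter_subset _ _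

lemma Vs_anti : ∀ i, i ≤ t.steps → ∀ j, j ≤ i → t.Vs i ⊆ t.Vs j := by
  intro i
  induction i with
  | zero => intro _ j hj; interval_cases j; exact fun _ h => h
  | succ k ih =>
    intro hi j hj
    rcases Nat.eq_or_lt_of_le hj with h | h
    · subst h; exact fun _ h => h
    · exact (t.Vs_succ_sub k hi).trans (ih (by omega) j (by omega))

lemma Rs_anti : ∀ i, i ≤ t.steps → ∀ j, j ≤ i → t.Rs i ⊆ t.Rs j := by
  intro i
  induction i with
  | zero => intro _ j hj; interval_cases j; exact fun _ h => h
  | succ k ih =>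
    intro hi j hj
    rcases Nat.eq_or_lt_of_le hj with h | h
    · subst h; exact fun _ h => h
    · exact (t.Rs_succ_sub k hi).trans (ih (by omega) j (by omega))

lemma Vs_sub_V (i : ℕ) (hi : i ≤ t.steps) : t.Vs i ⊆ V := by
  have := t.Vs_anti i hi 0 (by omega)
  rwa [t.init_V] at this

lemma Rs_sub_R (i : ℕ) (hi : i ≤ t.steps) : t.Rs i ⊆ R := by
  have := t.Rs_anti i hi 0 (by omega)
  rwa [t.init_R] at this

/-- Key geometric fact: if `w` hits `riv j` and some ray `r` with larger
`x`-coordinate also hits `w`, then `r` is hit by `vtop j` or `vbot j`. -/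
lemma hit2 (j : ℕ) (h1 : 1 ≤ j) (h2 : j ≤ t.steps) (w : VSeg)
    (hw : w ∈ (t.Vs (j-1)).filter (fun v => hits (t.riv j) v))
    (r : Ray) (hrx : (t.riv j).x ≤ r.x) (hrw : hits r w) :
    hits r (t.vtop j) ∨ hits r (t.vbot j) := by
  have htop := t.vtop_mem j h1 h2
  have hbot := t.vbot_mem j h1 h2
  have hhi := t.vtop_top j h1 h2 w hw
  have hlo := t.vbot_bot j h1 h2 w hw
  simp only [Finset.mem_filter] at htop hbot
  obtain ⟨-, htx, htl, -⟩ : _ ∧ _ ∧ _ ∧ _ := ⟨htop.1, htop.2⟩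
  obtain ⟨-, hbx, -, hbh⟩ : _ ∧ _ ∧ _ ∧ _ := ⟨hbot.1, hbot.2⟩
  rcases le_total r.y (t.riv j).y with h | h
  · exact Or.inr ⟨hbx.trans hrx, hlo.trans hrw.2.1, h.trans hbh⟩
  · exact Or.inl ⟨htx.trans hrx, htl.trans h, hrw.2.2.trans hhi⟩

/-- Every segment of `V` hitting `riv i` is still alive at every step `j ≤ i-1`. -/
lemma filter_sub_Vs (i : ℕ) (h1 : 1 ≤ i) (h2 : i ≤ t.steps) :
    ∀ j, j ≤ i - 1 → V.filter (fun v => hits (t.riv i) v) ⊆ t.Vs j := by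
  intro j
  induction j with
  | zero => intro _; rw [t.init_V]; exact Finset.filter_subset _ _
  | succ k ih =>
    intro hk w hw
    have hwk : w ∈ t.Vs k := ih (by omega) hw
    have hstep := t.V_step (k+1) (by omega) (by omega)
    simp only [Nat.add_sub_cancel] at hstep
    rw [hstep]
    simp only [Finset.mem_sdiff, Finset.mem_filter]
    refine ⟨hwk, fun hc => ?_⟩
    have hrivi : t.riv i ∈ t.Rs (k+1) := by
      exact t.Rs_anti (i-1) (by omega) (k+1) (by omega) (t.riv_mem i h1 h2)
    have hrx : (t.riv (k+1)).x ≤ (t.riv i).x := by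
      have := t.riv_min (k+1) (by omega) (by omega) (t.riv i)
      simp only [Nat.add_sub_cancel] at this
      exact this (t.Rs_anti (i-1) (by omega) k (by omega) (t.riv_mem i h1 h2))
    have hriw : hits (t.riv i) w := (Finset.mem_filter.mp hw).2
    have := t.hit2 (k+1) (by omega) (by omega) w
      (by simp only [Nat.add_sub_cancel, Finset.mem_filter]; exact ⟨hwk, hc.2⟩)
      (t.riv i) hrx hriw
    have hstepR := t.R_step (k+1) (by omega) (by omega)
    simp only [Nat.add_sub_cancel] at hstepR
    rw [hstepR, Finset.mem_filter] at hrivi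
    rcases this with h | h
    · exact hrivi.2.1 h
    · exact hrivi.2.2 h

lemma Sol_succ_sub (k : ℕ) (hk : k + 1 ≤ t.steps) : t.Sol k ⊆ t.Sol (k+1) := by
  have h := t.Sol_step (k+1) (by omega) hk
  simp only [Nat.add_sub_cancel] at h
  rw [h]; exact Finset.subset_union_left

lemma cover : ∀ i, i ≤ t.steps → ∀ r ∈ R, r ∈ t.Rs i ∨ ∃ v ∈ t.Sol i, hits r v := by
  intro i
  induction i with
  | zero => intro _ r hr; exact Or.inl (by rwa [t.init_R])
  | succ k ih =>
    intro hi r hr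
    rcases ih (by omega) r hr with h | ⟨v, hv, hvr⟩
    · by_cases hc : hits r (t.vtop (k+1)) ∨ hits r (t.vbot (k+1))
      · right
        have hs := t.Sol_step (k+1) (by omega) hi
        simp only [Nat.add_sub_cancel] at hs
        rcases hc with hc | hc
        · exact ⟨t.vtop (k+1), by rw [hs]; simp, hc⟩
        · exact ⟨t.vbot (k+1), by rw [hs]; simp, hc⟩
      · left
        have hsR := t.R_step (k+1) (by omega) hi
        simp only [Nat.add_sub_cancel] at hsR
        rw [hsR, Finset.mem_filter]
        push_neg at hc
        exact ⟨h, hc⟩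
    · exact Or.inr ⟨v, t.Sol_succ_sub k hi hv, hvr⟩

lemma Sol_card : ∀ i, i ≤ t.steps → (t.Sol i).card ≤ 2 * i := by
  intro i
  induction i with
  | zero => intro _; simp [t.init_S]
  | succ k ih =>
    intro hi
    have hs := t.Sol_step (k+1) (by omega) hi
    simp only [Nat.add_sub_cancel] at hs
    calc (t.Sol (k+1)).card ≤ (t.Sol k).card + ({t.vtop (k+1), t.vbot (k+1)} : Finset VSeg).card := by
          rw [hs]; exact Finset.card_union_le _ _
      _ ≤ 2 * k + 2 := by
          have : ({t.vtop (k+1), t.vbot (k+1)} : Finset VSeg).card ≤ 2 :=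
            Finset.card_insert_le _ _ |>.trans (by simp)
          omega
      _ = 2 * (k + 1) := by ring

end KMNTrace

/-- Lemma 3: the set `S` returned by the KMN algorithm is feasible
for the SRS covering program and has cardinality at most twice the cost of any
feasible fractional solution of its LP relaxation; hence `|S| ≤ 2·OPT(Q_l)` and
in particular `OPT(Q) ≤ 2·OPT(Q_l)`. -/
theorem KMN_two_approx_of_LP (R : Finset Ray) (V : Finset VSeg)
    (hVok : ∀ v ∈ V, v.lo ≤ v.hi)
    (hRdisj : ∀ r ∈ R, ∀ r' ∈ R, r ≠ r' → r.y ≠ r'.y)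
    (hVdisj : ∀ v ∈ V, ∀ w ∈ V, v ≠ w → v.x ≠ w.x)
    (hfeas : ∀ r ∈ R, ∃ v ∈ V, hits r v)
    (t : KMNTrace R V)
    (x : VSeg → ℝ)
    (hx01 : ∀ v, 0 ≤ x v ∧ x v ≤ 1)
    (hxfeas : ∀ r ∈ R, 1 ≤ ∑ v ∈ V.filter (fun v => hits r v), x v) :
    (∀ r ∈ R, ∃ v ∈ t.Sol t.steps, hits r v) ∧
    ((t.Sol t.steps).card : ℝ) ≤ 2 * ∑ v ∈ V, x v := by
  set n := t.steps with hn
  constructor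
  · intro r hr
    rcases t.cover n le_rfl r hr with h | h
    · rw [t.term] at h; exact absurd h (Finset.notMem_empty r)
    · exact h
  · -- the neighborhood sets
    set f : ℕ → Finset VSeg :=
      fun i => (t.Vs i).filter (fun v => hits (t.riv (i+1)) v) with hf
    -- each neighborhood set carries LP-weight at least 1
    have hN1 : ∀ i ∈ Finset.range n, (1:ℝ) ≤ ∑ v ∈ f i, x v := by
      intro i hi
      rw [Finset.mem_range] at hi
      have hriv : t.riv (i+1) ∈ R := t.Rs_sub_R i (by omega)
        (by simpa using t.riv_mem (i+1) (by omega) (by omega))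
      have hsub : V.filter (fun v => hits (t.riv (i+1)) v) ⊆ f i := by
        intro w hw
        have h1 := t.filter_sub_Vs (i+1) (by omega) (by omega) i (by omega) hw
        rw [hf]
        exact Finset.mem_filter.mpr ⟨h1, (Finset.mem_filter.mp hw).2⟩
      calc (1:ℝ) ≤ ∑ v ∈ V.filter (fun v => hits (t.riv (i+1)) v), x v :=
            hxfeas _ hriv
        _ ≤ ∑ v ∈ f i, x v :=
            Finset.sum_le_sum_of_subset_of_nonneg hsub (fun v _ _ => (hx01 v).1)
    -- the neighborhood sets are pairwise disjoint
    have key : ∀ i j, i < j → j < n → Disjoint (f i) (f j) := by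
      intro i j hlt hj
      have hstep := t.V_step (i+1) (by omega) (by omega)
      simp only [Nat.add_sub_cancel] at hstep
      have hVji : t.Vs j ⊆ t.Vs (i+1) := t.Vs_anti j (by omega) (i+1) (by omega)
      refine Finset.disjoint_left.mpr (fun w hwi hwj => ?_)
      have hw1 : w ∈ t.Vs (i+1) := hVji (Finset.filter_subset _ _ hwj)
      rw [hstep, Finset.mem_sdiff] at hw1
      exact hw1.2 hwi
    have hdisj : (↑(Finset.range n) : Set ℕ).PairwiseDisjoint f := by
      intro i hi j hj hij
      simp only [Finset.coe_range, Set.mem_Iio] at hi hj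
      rcases lt_or_gt_of_ne hij with h | h
      · exact key i j h hj
      · exact (key j i h hi).symm
    -- total LP weight is at least n
    have hsum : (n : ℝ) ≤ ∑ v ∈ V, x v := by
      have hU : (Finset.range n).biUnion f ⊆ V := by
        intro w hw
        rw [Finset.mem_biUnion] at hw
        obtain ⟨i, hi, hwi⟩ := hw
        rw [Finset.mem_range] at hi
        exact t.Vs_sub_V i (by omega) (Finset.filter_subset _ _ hwi)
      calc (n : ℝ) = ∑ _i ∈ Finset.range n, (1:ℝ) := by simp
        _ ≤ ∑ i ∈ Finset.range n, ∑ v ∈ f i, x v := Finset.sum_le_sum hN1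
        _ = ∑ v ∈ (Finset.range n).biUnion f, x v :=
            (Finset.sum_biUnion hdisj).symm
        _ ≤ ∑ v ∈ V, x v :=
            Finset.sum_le_sum_of_subset_of_nonneg hU (fun v _ _ => (hx01 v).1)
    have hcard : ((t.Sol n).card : ℝ) ≤ 2 * n := by
      have := t.Sol_card n le_rfl
      exact_mod_cast this
    calc ((t.Sol n).card : ℝ) ≤ 2 * n := hcard
      _ ≤ 2 * ∑ v ∈ V, x v := by linarith
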